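/- Let (Aⱼ)ⱼ∈ℕ be a partition and, for each j ∈ ℕ, let Sʲ = conv(X₁ʲ, …, X_Nʲ) be a conditional simplex of dimension N in (L⁰)^d. Then the set Σⱼ 1_{Aⱼ} Sʲ := {Σⱼ 1_{Aⱼ} Zⱼ : Zⱼ ∈ Sʲ for all j} equals conv(Y₁, …, Y_N), where Y_k = Σⱼ 1_{Aⱼ} X_kʲ for k = 1, …, N, and Y₁, …, Y_N are affinely independent; in particular, Σⱼ 1_{Aⱼ} Sʲ is a conditional simplex of dimension N. -/

import Mathlib

open MeasureTheory Filter

noncomputable section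

variable {Ω : Type*} [MeasurableSpace Ω]

/-- `L⁰(Ω,𝒜,P)`: equivalence classes of real-valued measurable functions modulo
`P`-almost-sure equality. -/
abbrev L0 (P : Measure Ω) : Type _ := Ω →ₘ[P] ℝ

namespace L0

variable (P : Measure Ω)

/-- The indicator `1_A` of a measurable set as an element of `L⁰`. -/
def ind (A : Set Ω) : L0 P :=
  letI := Classical.dec (MeasurableSet A)
  if h : MeasurableSet A then
    AEEqFun.mk (A.indicator fun _ => (1 : ℝ)) (aestronglyMeasurable_const.indicator h)
  else 0

/-- A partition: a countable family of measurable sets, pairwise disjoint up to null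
sets, covering `Ω` up to a null set. -/
structure IsPartition (A : ℕ → Set Ω) : Prop where
  meas : ∀ i, MeasurableSet (A i)
  disj : ∀ i j, i ≠ j → P (A i ∩ A j) = 0
  full : P (⋃ i, A i) = 1

/-- `Z = Σᵢ 1_{Aᵢ} Xᵢ` in `L⁰`: `Z` agrees with `Xᵢ` on `Aᵢ`, i.e. `1_{Aᵢ}·Z = 1_{Aᵢ}·Xᵢ`. -/
def IsGluing1 (A : ℕ → Set Ω) (X : ℕ → L0 P) (Z : L0 P) : Prop :=
  ∀ i, ind P (A i) * Z = ind P (A i) * X i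

/-- `Z = Σᵢ 1_{Aᵢ} Xᵢ` in `(L⁰)^d`. -/
def IsGluing {d : ℕ} (A : ℕ → Set Ω) (X : ℕ → Fin d → L0 P) (Z : Fin d → L0 P) : Prop :=
  ∀ k, IsGluing1 P A (fun i => X i k) (Z k)

/-- The σ-stable hull `σ(𝒞)` of a set `𝒞 ⊆ (L⁰)^d`. -/
def sigmaHull {d : ℕ} (C : Set (Fin d → L0 P)) : Set (Fin d → L0 P) :=
  {Z | ∃ (A : ℕ → Set Ω) (X : ℕ → Fin d → L0 P),
    IsPartition P A ∧ (∀ i, X i ∈ C) ∧ IsGluing P A X Z}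

/-- A function `f` defined (at least) on a σ-stable set `C ⊆ (L⁰)^d` is local if
`f(Σᵢ 1_{Aᵢ} Xᵢ) = Σᵢ 1_{Aᵢ} f(Xᵢ)` for every partition `(Aᵢ)` and family `(Xᵢ)` in `C`. -/
def IsLocal {d e : ℕ} (C : Set (Fin d → L0 P)) (f : (Fin d → L0 P) → (Fin e → L0 P)) : Prop :=
  ∀ (A : ℕ → Set Ω) (X : ℕ → Fin d → L0 P) (Z : Fin d → L0 P),
    IsPartition P A → (∀ i, X i ∈ C) → Z ∈ C → IsGluing P A X Z →
    IsGluing P A (fun i => f (X i)) (f Z)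

/-- Locality for functions with values in `L⁰`. -/
def IsLocalScalar {d : ℕ} (C : Set (Fin d → L0 P)) (f : (Fin d → L0 P) → L0 P) : Prop :=
  ∀ (A : ℕ → Set Ω) (X : ℕ → Fin d → L0 P) (Z : Fin d → L0 P),
    IsPartition P A → (∀ i, X i ∈ C) → Z ∈ C → IsGluing P A X Z →
    IsGluing1 P A (fun i => f (X i)) (f Z)

/-- Locality for functions from `L⁰` to `L⁰`. -/
def IsLocal1 (C : Set (L0 P)) (f : L0 P → L0 P) : Prop :=
  ∀ (A : ℕ → Set Ω) (X : ℕ → L0 P) (Z : L0 P),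
    IsPartition P A → (∀ i, X i ∈ C) → Z ∈ C → IsGluing1 P A X Z →
    IsGluing1 P A (fun i => f (X i)) (f Z)

/-- `P`-almost sure convergence of a sequence in `L⁰`. -/
def TendstoAS (X : ℕ → L0 P) (Y : L0 P) : Prop :=
  ∀ᵐ ω ∂P, Tendsto (fun n => X n ω) atTop (nhds (Y ω))

/-- `P`-almost sure convergence of a sequence in `(L⁰)^d`. -/
def TendstoASd {d : ℕ} (X : ℕ → Fin d → L0 P) (Y : Fin d → L0 P) : Prop :=
  ∀ k, TendstoAS P (fun n => X n k) (Y k)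

/-- Sequential continuity (w.r.t. `P`-a.s. convergence) of `f` on `C ⊆ (L⁰)^d`. -/
def SeqContinuous {d e : ℕ} (C : Set (Fin d → L0 P)) (f : (Fin d → L0 P) → (Fin e → L0 P)) :
    Prop :=
  ∀ (X : ℕ → Fin d → L0 P) (Y : Fin d → L0 P), (∀ n, X n ∈ C) → Y ∈ C →
    TendstoASd P X Y → TendstoASd P (fun n => f (X n)) (f Y)

/-- Sequential continuity for functions from `L⁰` to `L⁰`. -/
def SeqContinuous1 (C : Set (L0 P)) (f : L0 P → L0 P) : Prop :=
  ∀ (X : ℕ → L0 P) (Y : L0 P), (∀ n, X n ∈ C) → Y ∈ C →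
    TendstoAS P X Y → TendstoAS P (fun n => f (X n)) (f Y)

/-- The `L⁰`-convex hull `conv(X₁,…,X_N)` of a finite family in `(L⁰)^d`. -/
def conv {d : ℕ} {ι : Type*} [Fintype ι] (X : ι → Fin d → L0 P) : Set (Fin d → L0 P) :=
  {Y | ∃ lam : ι → L0 P, (∀ i, 0 ≤ lam i) ∧ (∑ i, lam i) = 1 ∧ Y = ∑ i, lam i • X i}

/-- The affine hull `aff(X₁,…,X_N)` of a finite family in `(L⁰)^d`. -/
def aff {d : ℕ} {ι : Type*} [Fintype ι] (X : ι → Fin d → L0 P) : Set (Fin d → L0 P) :=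
  {Y | ∃ lam : ι → L0 P, (∑ i, lam i) = 1 ∧ Y = ∑ i, lam i • X i}

/-- Affine independence of `X₁,…,X_N` in `(L⁰)^d`: either `N = 1`, or `N > 1` and
`Σᵢ₌₁^{N−1} λᵢ (Xᵢ − X_N) = 0` implies `λ₁ = ⋯ = λ_{N−1} = 0`. -/
def AffInd {d : ℕ} : {N : ℕ} → (X : Fin N → Fin d → L0 P) → Prop
  | 0, _ => False
  | 1, _ => True
  | (m + 2), X => ∀ lam : Fin (m + 1) → L0 P,
      (∑ i : Fin (m + 1), lam i • (X i.castSucc - X (Fin.last (m + 1)))) = 0 → ∀ i, lam i = 0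

/-- The `L⁰`-scalar product on `(L⁰)^d`. -/
def inner {d : ℕ} (X Y : Fin d → L0 P) : L0 P := ∑ k, X k * Y k

/-- The `L⁰`-norm on `(L⁰)^d`. -/
def norm {d : ℕ} (X : Fin d → L0 P) : L0 P :=
  AEEqFun.comp Real.sqrt Real.continuous_sqrt (inner P X X)

/-- `D` is the essential supremum (least upper bound in the `P`-a.s. order) of a set
`F ⊆ L⁰`. -/
def IsEssSup (F : Set (L0 P)) (D : L0 P) : Prop :=
  (∀ X ∈ F, X ≤ D) ∧ ∀ D' : L0 P, (∀ X ∈ F, X ≤ D') → D ≤ D'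

/-- `𝒞 ⊆ (L⁰)^d` is bounded if `esssup_{X ∈ 𝒞} ‖X‖` belongs to `L⁰`. -/
def Bounded {d : ℕ} (C : Set (Fin d → L0 P)) : Prop :=
  ∃ b : L0 P, ∀ X ∈ C, norm P X ≤ b

/-- `𝒞 ⊆ (L⁰)^d` is sequentially closed if it contains all `P`-a.s. limits of its
sequences. -/
def SeqClosed {d : ℕ} (C : Set (Fin d → L0 P)) : Prop :=
  ∀ (X : ℕ → Fin d → L0 P) (Y : Fin d → L0 P), (∀ n, X n ∈ C) → TendstoASd P X Y → Y ∈ C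

/-- `L⁰`-convexity of a subset of `(L⁰)^d`. -/
def L0Convex {d : ℕ} (C : Set (Fin d → L0 P)) : Prop :=
  ∀ X ∈ C, ∀ Y ∈ C, ∀ lam : L0 P, 0 ≤ lam → lam ≤ 1 → lam • X + (1 - lam) • Y ∈ C

/-- The vertices `Y_k^π = (1/k) Σᵢ₌₁ᵏ X_{π(i)}` of the member `C_π` of the barycentric
subdivision (0-based: `bary P X π k = (1/(k+1)) Σ_{i ≤ k} X_{π(i)}`). -/
def bary {d N : ℕ} (X : Fin N → Fin d → L0 P) (π : Equiv.Perm (Fin N)) (k : Fin N) :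
    Fin d → L0 P :=
  ((k.1 + 1 : ℝ)⁻¹) • ∑ i ∈ Finset.univ.filter (· ≤ k), X (π i)

end L0

end

set_option linter.unusedSectionVars false

namespace Stmt6Aux

open MeasureTheory Filter

variable {Ω : Type*} [MeasurableSpace Ω] (P : Measure Ω)

theorem coeFn_ind {B : Set Ω} (hB : MeasurableSet B) :
    ⇑(L0.ind P B) =ᵐ[P] B.indicator fun _ => (1 : ℝ) := by
  unfold L0.ind
  rw [dif_pos hB]
  exact AEEqFun.coeFn_mk _ _

theorem ind_mul_eq_iff {B : Set Ω} (hB : MeasurableSet B) {U V : L0 P} :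
    L0.ind P B * U = L0.ind P B * V ↔ ∀ᵐ ω ∂P, ω ∈ B → U ω = V ω := by
  constructor
  · intro h
    have h' : ⇑(L0.ind P B * U) =ᵐ[P] ⇑(L0.ind P B * V) := by rw [h]
    filter_upwards [h', AEEqFun.coeFn_mul (L0.ind P B) U, AEEqFun.coeFn_mul (L0.ind P B) V,
      coeFn_ind P hB] with ω h1 h2 h3 h4 hω
    have hind : (L0.ind P B) ω = 1 := by rw [h4]; simp [Set.indicator_of_mem hω]
    rw [h2, h3] at h1
    simpa [Pi.mul_apply, hind] using h1
  · intro h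
    apply AEEqFun.ext
    filter_upwards [AEEqFun.coeFn_mul (L0.ind P B) U, AEEqFun.coeFn_mul (L0.ind P B) V,
      coeFn_ind P hB, h] with ω h2 h3 h4 h5
    rw [h2, h3]
    simp only [Pi.mul_apply, h4]
    by_cases hω : ω ∈ B
    · simp [Set.indicator_of_mem hω, h5 hω]
    · simp [Set.indicator_of_notMem hω]

variable [IsProbabilityMeasure P] {A : ℕ → Set Ω}

theorem ae_exists (hA : L0.IsPartition P A) : ∀ᵐ ω ∂P, ∃ i, ω ∈ A i := by
  have hmeas : MeasurableSet (⋃ i, A i) := MeasurableSet.iUnion hA.meas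
  have h0 : P (⋃ i, A i)ᶜ = 0 := by
    rw [measure_compl hmeas (measure_ne_top _ _), hA.full, measure_univ, tsub_self]
  rw [ae_iff]
  convert h0 using 2
  ext ω
  simp [Set.mem_iUnion]

theorem eq_of_partition (hA : L0.IsPartition P A) {U V : L0 P}
    (h : ∀ i, ∀ᵐ ω ∂P, ω ∈ A i → U ω = V ω) : U = V := by
  apply AEEqFun.ext
  filter_upwards [ae_all_iff.2 h, ae_exists P hA] with ω h1 h2
  obtain ⟨i, hi⟩ := h2
  exact h1 i hi

theorem le_of_partition (hA : L0.IsPartition P A) {U V : L0 P}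
    (h : ∀ i, ∀ᵐ ω ∂P, ω ∈ A i → U ω ≤ V ω) : U ≤ V := by
  rw [← AEEqFun.coeFn_le]
  filter_upwards [ae_all_iff.2 h, ae_exists P hA] with ω h1 h2
  obtain ⟨i, hi⟩ := h2
  exact h1 i hi

theorem coeFn_finsetSum {ι : Type*} (s : Finset ι) (f : ι → L0 P) :
    ⇑(∑ i ∈ s, f i) =ᵐ[P] fun ω => ∑ i ∈ s, f i ω := by
  classical
  induction s using Finset.induction with
  | empty => simp; exact AEEqFun.coeFn_zero (β := ℝ)
  | insert _ _ hnm ih =>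
    rename_i a s
    rw [Finset.sum_insert hnm]
    filter_upwards [AEEqFun.coeFn_add (f a) (∑ i ∈ s, f i), ih] with ω h1 h2
    rw [h1]
    simp [Finset.sum_insert hnm, h2]

theorem mul_zero' (f : L0 P) : f * 0 = 0 := by
  apply AEEqFun.ext
  filter_upwards [AEEqFun.coeFn_mul f 0, AEEqFun.coeFn_zero (β := ℝ)] with ω h1 h2
  rw [h1]
  simp [h2]

theorem exists_glue (hA : L0.IsPartition P A) (f : ℕ → L0 P) :
    ∃ g : L0 P, ∀ i, ∀ᵐ ω ∂P, ω ∈ A i → g ω = f i ω := by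
  classical
  have hp : ∀ ω, ∃ n, ω ∈ A n ∨ ω ∉ ⋃ i, A i := by
    intro ω
    by_cases h : ω ∈ ⋃ i, A i
    · obtain ⟨i, hi⟩ := Set.mem_iUnion.1 h
      exact ⟨i, Or.inl hi⟩
    · exact ⟨0, Or.inr h⟩
  obtain ⟨F, hFmeas, hFmem⟩ : ∃ F : Ω → ℕ, (Measurable fun ω => f (F ω) ω) ∧
      ∀ ω, ω ∈ ⋃ i, A i → ω ∈ A (F ω) := by
    refine ⟨fun ω => Nat.find (hp ω),
      Measurable.find (p := fun n ω => ω ∈ A n ∨ ω ∉ ⋃ i, A i) (fun n => (f n).measurable)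
        (fun n => show MeasurableSet (A n ∪ (⋃ i, A i)ᶜ) from
          (hA.meas n).union (MeasurableSet.iUnion hA.meas).compl) hp, ?_⟩
    intro ω hω
    rcases Nat.find_spec (hp ω) with h | h
    · exact h
    · exact absurd hω h
  refine ⟨AEEqFun.mk _ hFmeas.aestronglyMeasurable, ?_⟩
  intro i
  have hdisj : ∀ᵐ ω ∂P, ∀ j, j ≠ i → ω ∉ A i ∩ A j := by
    rw [ae_all_iff]
    intro j
    by_cases hj : j = i
    · exact Eventually.of_forall fun ω h => absurd hj h
    · have h0 : P (A i ∩ A j) = 0 := hA.disj i j (fun h => hj h.symm)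
      filter_upwards [measure_eq_zero_iff_ae_notMem.mp h0] with ω hω _
      exact hω
  filter_upwards [AEEqFun.coeFn_mk _ hFmeas.aestronglyMeasurable, hdisj] with ω hcoe hd hω
  rw [hcoe]
  have hF : ω ∈ A (F ω) := hFmem ω (Set.mem_iUnion.2 ⟨i, hω⟩)
  by_cases hni : F ω = i
  · rw [hni]
  · exact absurd ⟨hω, hF⟩ (hd _ hni)

theorem coeFn_combo {d N : ℕ} (lam : Fin N → L0 P) (V : Fin N → Fin d → L0 P) (c : Fin d) :
    ∀ᵐ ω ∂P, ((∑ k, lam k • V k) c) ω = ∑ k, (lam k) ω * (V k c) ω := by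
  have hc : (∑ k, lam k • V k) c = ∑ k, lam k * V k c := by
    rw [Finset.sum_apply]
    exact Finset.sum_congr rfl fun k _ => rfl
  rw [hc]
  filter_upwards [coeFn_finsetSum P Finset.univ (fun k => lam k * V k c),
    ae_all_iff.2 fun k => AEEqFun.coeFn_mul (lam k) (V k c)] with ω h1 h2
  rw [h1]
  exact Finset.sum_congr rfl fun k _ => h2 k

end Stmt6Aux

open MeasureTheory in
/-- a σ-combination `Σⱼ 1_{Aⱼ} Sʲ` of conditional simplexes of dimension `N`
along a partition is a conditional simplex of dimension `N`. -/
theorem stmt_6 {Ω : Type*} [MeasurableSpace Ω] (P : Measure Ω) [IsProbabilityMeasure P]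
    {d N : ℕ} (A : ℕ → Set Ω) (hA : L0.IsPartition P A)
    (X : ℕ → Fin N → Fin d → L0 P) (hX : ∀ j, L0.AffInd P (X j))
    (Y : Fin N → Fin d → L0 P)
    (hY : ∀ k, L0.IsGluing P A (fun j => X j k) (Y k)) :
    {Z | ∃ W : ℕ → Fin d → L0 P, (∀ j, W j ∈ L0.conv P (X j)) ∧ L0.IsGluing P A W Z}
        = L0.conv P Y
      ∧ L0.AffInd P Y := by
  classical
  have hY' : ∀ (k : Fin N) (c : Fin d) (j : ℕ), ∀ᵐ ω ∂P, ω ∈ A j → (Y k c) ω = (X j k c) ω :=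
    fun k c j => (Stmt6Aux.ind_mul_eq_iff P (hA.meas j)).1 (hY k c j)
  constructor
  · -- set equality
    ext Z
    simp only [Set.mem_setOf_eq]
    constructor
    · rintro ⟨W, hW, hWZ⟩
      choose lam hlam0 hlam1 hlamW using hW
      choose mu hmu using fun k => Stmt6Aux.exists_glue P hA (fun j => lam j k)
      refine ⟨mu, ?_, ?_, ?_⟩
      · intro k
        apply Stmt6Aux.le_of_partition P hA
        intro j
        filter_upwards [AEEqFun.coeFn_le.2 (hlam0 j k), hmu k j] with ω h0 h1 hω
        rw [h1 hω]
        exact h0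
      · apply Stmt6Aux.eq_of_partition P hA
        intro j
        have h1 : ⇑(∑ k, lam j k) =ᵐ[P] ⇑(1 : L0 P) := by rw [hlam1 j]
        filter_upwards [Stmt6Aux.coeFn_finsetSum P Finset.univ mu,
          Stmt6Aux.coeFn_finsetSum P Finset.univ (lam j), h1,
          ae_all_iff.2 fun k => hmu k j] with ω hs1 hs2 h1' hmu' hω
        rw [hs1, Finset.sum_congr rfl fun k _ => hmu' k hω, ← hs2, h1']
      · funext c
        apply Stmt6Aux.eq_of_partition P hA
        intro j
        have hWj : ∀ᵐ ω ∂P, ω ∈ A j → (Z c) ω = (W j c) ω :=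
          (Stmt6Aux.ind_mul_eq_iff P (hA.meas j)).1 (hWZ c j)
        have hWc : ∀ᵐ ω ∂P, ((W j) c) ω = ∑ k, (lam j k) ω * (X j k c) ω := by
          rw [hlamW j]; exact Stmt6Aux.coeFn_combo P (lam j) (X j) c
        filter_upwards [hWj, hWc, Stmt6Aux.coeFn_combo P mu Y c,
          ae_all_iff.2 fun k => hmu k j,
          ae_all_iff.2 fun k => hY' k c j] with ω h1 h2 h3 h4 h5 hω
        rw [h1 hω, h2, h3]
        exact (Finset.sum_congr rfl fun k _ => by rw [h4 k hω, h5 k hω]).symm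
    · rintro ⟨lam, h0, h1, rfl⟩
      refine ⟨fun j => ∑ k, lam k • X j k, fun j => ⟨lam, h0, h1, rfl⟩, ?_⟩
      intro c j
      rw [Stmt6Aux.ind_mul_eq_iff P (hA.meas j)]
      filter_upwards [Stmt6Aux.coeFn_combo P lam Y c, Stmt6Aux.coeFn_combo P lam (X j) c,
        ae_all_iff.2 fun k => hY' k c j] with ω h2 h3 h5 hω
      rw [h2, h3]
      exact Finset.sum_congr rfl fun k _ => by rw [h5 k hω]
  · -- affine independence
    match N, X, Y, hX, hY, hY' with
    | 0, X, Y, hX, hY, hY' => exact False.elim (hX 0)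
    | 1, X, Y, hX, hY, hY' => trivial
    | (m + 2), X, Y, hX, hY, hY' =>
      intro lam hlam i
      have key : ∀ j i, L0.ind P (A j) * lam i = 0 := by
        intro j
        refine hX j (fun i => L0.ind P (A j) * lam i) ?_
        funext c
        show _ = (0 : L0 P)
        have hlamc : ⇑((∑ i : Fin (m + 1),
            lam i • (Y i.castSucc - Y (Fin.last (m + 1)))) c) =ᵐ[P] ⇑(0 : L0 P) := by
          rw [hlam]; rfl
        apply AEEqFun.ext
        have hc : (∑ i : Fin (m + 1), (L0.ind P (A j) * lam i) •
            (X j i.castSucc - X j (Fin.last (m + 1)))) c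
            = ∑ i : Fin (m + 1), (L0.ind P (A j) * lam i) *
              (X j i.castSucc c - X j (Fin.last (m + 1)) c) := by
          rw [Finset.sum_apply]
          exact Finset.sum_congr rfl fun k _ => rfl
        rw [hc]
        have hc2 : (∑ i : Fin (m + 1), lam i • (Y i.castSucc - Y (Fin.last (m + 1)))) c
            = ∑ i : Fin (m + 1), lam i * (Y i.castSucc c - Y (Fin.last (m + 1)) c) := by
          rw [Finset.sum_apply]
          exact Finset.sum_congr rfl fun k _ => rfl
        rw [hc2] at hlamc
        filter_upwards [hlamc,
          Stmt6Aux.coeFn_finsetSum P Finset.univ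
            (fun i : Fin (m + 1) => (L0.ind P (A j) * lam i) *
              (X j i.castSucc c - X j (Fin.last (m + 1)) c)),
          Stmt6Aux.coeFn_finsetSum P Finset.univ
            (fun i : Fin (m + 1) => lam i * (Y i.castSucc c - Y (Fin.last (m + 1)) c)),
          ae_all_iff.2 fun i : Fin (m + 1) =>
            AEEqFun.coeFn_mul (L0.ind P (A j) * lam i)
              (X j i.castSucc c - X j (Fin.last (m + 1)) c),
          ae_all_iff.2 fun i : Fin (m + 1) =>
            AEEqFun.coeFn_mul (lam i) (Y i.castSucc c - Y (Fin.last (m + 1)) c),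
          ae_all_iff.2 fun i : Fin (m + 1) =>
            AEEqFun.coeFn_mul (L0.ind P (A j)) (lam i),
          ae_all_iff.2 fun i : Fin (m + 1) =>
            AEEqFun.coeFn_sub (X j i.castSucc c) (X j (Fin.last (m + 1)) c),
          ae_all_iff.2 fun i : Fin (m + 1) =>
            AEEqFun.coeFn_sub (Y i.castSucc c) (Y (Fin.last (m + 1)) c),
          ae_all_iff.2 fun i : Fin (m + 1) => hY' i.castSucc c j,
          hY' (Fin.last (m + 1)) c j,
          Stmt6Aux.coeFn_ind P (hA.meas j)] with ω hz hs1 hs2 hm1 hm2 hm3 hsub1 hsub2 hyx hyxl hind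
        rw [hs1]
        by_cases hω : ω ∈ A j
        · have hind1 : (L0.ind P (A j)) ω = 1 := by rw [hind]; simp [Set.indicator_of_mem hω]
          have : ∀ i : Fin (m + 1), ((L0.ind P (A j) * lam i) *
              (X j i.castSucc c - X j (Fin.last (m + 1)) c)) ω
              = (lam i * (Y i.castSucc c - Y (Fin.last (m + 1)) c)) ω := by
            intro i
            rw [hm1 i, hm2 i]
            simp only [Pi.mul_apply]
            rw [hm3 i]
            simp only [Pi.mul_apply, hind1, one_mul]
            rw [hsub1 i, hsub2 i]
            simp only [Pi.sub_apply]
            rw [hyx i hω, hyxl hω]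
          rw [Finset.sum_congr rfl fun i _ => this i, ← hs2, hz]
        · have hind0 : (L0.ind P (A j)) ω = 0 := by
            rw [hind]; simp [Set.indicator_of_notMem hω]
          have : ∀ i : Fin (m + 1), ((L0.ind P (A j) * lam i) *
              (X j i.castSucc c - X j (Fin.last (m + 1)) c)) ω = 0 := by
            intro i
            rw [hm1 i]
            simp only [Pi.mul_apply]
            rw [hm3 i]
            simp [Pi.mul_apply, hind0]
          rw [Finset.sum_congr rfl fun i _ => this i]
          simp [AEEqFun.coeFn_zero]
      apply Stmt6Aux.eq_of_partition P hA
      intro j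
      have hmz : L0.ind P (A j) * lam i = L0.ind P (A j) * 0 := by
        rw [Stmt6Aux.mul_zero' P (L0.ind P (A j)), key j i]
      exact (Stmt6Aux.ind_mul_eq_iff P (hA.meas j)).1 hmz
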